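/- Stratified sampling budget exhaustion: with the CCS allocation of the previous context (strata sizes n_1 ≤ ... ≤ n_k processed in increasing size order, b_i = min(n_i, ⌊m_i/(k−i+1)⌋), m_{i+1} = m_i − b_i, m_1 = m ≤ Σ n_i), the final leftover budget m_{k+1} = m − Σ_{i=1}^k b_i satisfies m_{k+1} < k, i.e., the algorithm uses all but at most k − 1 units of the budget (the loss coming only from floor rounding). -/

import Mathlib

/-- The CCS budget allocation: processing strata (given as a list of sizes, smallest
first) in order, each stratum receives the minimum of its size and the floor of the
remaining budget divided by the number of remaining strata. -/
def ccsAlloc : List ℕ → ℕ → List ℕ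
  | [], _ => []
  | n :: ns, m =>
      let b := min n (m / (ns.length + 1))
      b :: ccsAlloc ns (m - b)

lemma list_sum_lb (t : List ℕ) (c : ℕ) (h : ∀ x ∈ t, c ≤ x) :
    c * t.length ≤ t.sum := by
  induction t with
  | nil => simp
  | cons a t ih =>
      simp only [List.length_cons, List.sum_cons, Nat.mul_succ]
      have h1 := h a (by simp)
      have h2 := ih (fun x hx => h x (by simp [hx]))
      omega

/-- Budget exhaustion of the CCS allocation: for a nonempty list of strata sizes
sorted in increasing order and total budget `m ≤ Σ n_i`, the final leftover budget
`m − Σ b_i` is strictly less than the number of strata `k`. -/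
theorem ccsAlloc_leftover_lt (ns : List ℕ) (m : ℕ)
    (hne : ns ≠ []) (hsorted : ns.Pairwise (· ≤ ·)) (hm : m ≤ ns.sum) :
    m - (ccsAlloc ns m).sum < ns.length := by
  induction ns generalizing m with
  | nil => exact absurd rfl hne
  | cons n t ih =>
    rcases List.pairwise_cons.mp hsorted with ⟨hmono, hs2⟩
    by_cases ht : t = []
    · subst ht
      simp only [ccsAlloc, List.length_nil, List.sum_cons, List.sum_nil,
        List.length_cons, Nat.div_one] at *
      omega
    · simp only [ccsAlloc, List.sum_cons, List.length_cons]
      set b := min n (m / (t.length + 1)) with hbdef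
      have hkey : m - b ≤ t.sum := by
        by_cases hn : n ≤ m / (t.length + 1)
        · have hb : b = n := by omega
          simp only [List.sum_cons] at hm
          omega
        · have hb : b = m / (t.length + 1) := by omega
          have hdm := Nat.div_add_mod m (t.length + 1)
          have hr : m % (t.length + 1) < t.length + 1 :=
            Nat.mod_lt m (by omega)
          have h1 : m ≤ (m / (t.length + 1) + 1) * t.length + m / (t.length + 1) := by
            nlinarith
          have h2 : (m / (t.length + 1) + 1) * t.length ≤ t.sum := by
            apply list_sum_lb
            intro x hx
            have := hmono x hx
            omega
          omega
      have := ih (m - b) ht hs2 hkey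
      omega
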